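/- Let H ∈ ℝ^{m×n} be the incidence matrix of an oriented graph, H̄ = H ⊗ I_d, and let p ∈ ℝ^{dn} be a configuration whose edge vectors e_k = (H̄p)_k ∈ ℝ^d are all nonzero, with bearings g_k = e_k/‖e_k‖. Let L_B = H̄ᵀ Π H̄ with Π = blkdiag(π_{g_1},…,π_{g_m}), and let U = 1_n ⊗ I_d ∈ ℝ^{dn×d}. Then the column span of U together with the vector p is contained in the null space of L_B (i.e., L_B U = 0 and L_B p = 0), and consequently rank(L_B) ≤ dn − d − 1. -/

import Mathlib

open MeasureTheory Matrix
open scoped Kronecker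

/-- The projection operator `π_y = I_d - y yᵀ`. -/
noncomputable def proj {d : ℕ} (y : Fin d → ℝ) : Matrix (Fin d) (Fin d) ℝ :=
  1 - Matrix.vecMulVec y y

/-- `H` is the incidence matrix of an oriented graph. -/
def IsIncidence {m n : ℕ} (H : Matrix (Fin m) (Fin n) ℝ) : Prop :=
  ∃ head tail : Fin m → Fin n, (∀ k, head k ≠ tail k) ∧
    ∀ k i, H k i = if i = head k then 1 else if i = tail k then -1 else 0

/-- `H̄ = H ⊗ I_d`. -/
noncomputable def Hbar {m n : ℕ} (d : ℕ) (H : Matrix (Fin m) (Fin n) ℝ) :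
    Matrix (Fin m × Fin d) (Fin n × Fin d) ℝ :=
  H ⊗ₖ (1 : Matrix (Fin d) (Fin d) ℝ)

/-- `Π = blkdiag(π_{g_1}, …, π_{g_m})`. -/
noncomputable def blkProj {m d : ℕ} (g : Fin m → Fin d → ℝ) :
    Matrix (Fin m × Fin d) (Fin m × Fin d) ℝ :=
  Matrix.of fun p q => if p.1 = q.1 then proj (g p.1) p.2 q.2 else 0

/-- Euclidean norm of a vector in `ℝ^d` given as `Fin d → ℝ`. -/
noncomputable def enorm {d : ℕ} (v : Fin d → ℝ) : ℝ := Real.sqrt (v ⬝ᵥ v)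

/-- The bearing (unit vector) of a nonzero vector. -/
noncomputable def bearingOf {d : ℕ} (v : Fin d → ℝ) : Fin d → ℝ := (_root_.enorm v)⁻¹ • v

/-- The `k`-th edge vector `e_k = (H̄ p)_k ∈ ℝ^d` of a configuration `p`. -/
noncomputable def edgeVec {m n d : ℕ} (H : Matrix (Fin m) (Fin n) ℝ)
    (p : Fin n × Fin d → ℝ) (k : Fin m) : Fin d → ℝ :=
  fun i => (Hbar d H).mulVec p (k, i)

/-- The bearing Laplacian `L_B = H̄ᵀ Π H̄` of a configuration `p`. -/
noncomputable def LB {m n : ℕ} {d : ℕ} (H : Matrix (Fin m) (Fin n) ℝ)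
    (p : Fin n × Fin d → ℝ) : Matrix (Fin n × Fin d) (Fin n × Fin d) ℝ :=
  (Hbar d H)ᵀ * blkProj (fun k => bearingOf (edgeVec H p k)) * Hbar d H

/-- `U = 1_n ⊗ I_d`. -/
noncomputable def Umat (n d : ℕ) : Matrix (Fin n × Fin d) (Fin d) ℝ :=
  Matrix.of fun p j => if p.2 = j then 1 else 0

section Aux

variable {d m n : ℕ}

/-- projection of a nonzero vector's bearing block kills the edge vector -/
lemma vecMulVec_mulVec' {d : ℕ} (w v u : Fin d → ℝ) :
    (Matrix.vecMulVec w v).mulVec u = (v ⬝ᵥ u) • w := by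
  funext i
  simp only [Matrix.mulVec, dotProduct, Matrix.vecMulVec_apply, Pi.smul_apply,
    smul_eq_mul, Finset.sum_mul]
  apply Finset.sum_congr rfl
  intro j _; ring

/-- projection of a nonzero vector's bearing block kills the edge vector -/
lemma proj_bearing_mulVec {d : ℕ} (v : Fin d → ℝ) (hv : v ≠ 0) :
    (proj (bearingOf v)).mulVec v = 0 := by
  have hvv : (0:ℝ) < v ⬝ᵥ v := by
    rcases lt_or_eq_of_le (Finset.sum_nonneg fun j _ => mul_self_nonneg (v j)) with h | h
    · exact h
    · exact absurd (dotProduct_self_eq_zero.mp h.symm) hv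
  have hsq : _root_.enorm v * _root_.enorm v = v ⬝ᵥ v := Real.mul_self_sqrt hvv.le
  have hne : _root_.enorm v ≠ 0 := by
    intro h
    rw [h, mul_zero] at hsq
    exact hvv.ne' hsq.symm
  rw [proj, Matrix.sub_mulVec, Matrix.one_mulVec, vecMulVec_mulVec']
  have hone : (_root_.enorm v)⁻¹ * (v ⬝ᵥ v) * (_root_.enorm v)⁻¹ = 1 := by
    field_simp
    linarith [hsq]
  have hscal : (bearingOf v ⬝ᵥ v) • bearingOf v = v := by
    have hdp : bearingOf v ⬝ᵥ v = (_root_.enorm v)⁻¹ * (v ⬝ᵥ v) := by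
      rw [bearingOf, smul_dotProduct, smul_eq_mul]
    rw [hdp, bearingOf, smul_smul, hone, one_smul]
  rw [hscal, sub_self]

lemma rowSum_eq_zero (H : Matrix (Fin m) (Fin n) ℝ) (hH : IsIncidence H) (k : Fin m) :
    ∑ j, H k j = 0 := by
  obtain ⟨hd, tl, hne, hent⟩ := hH
  have key : ∀ j, H k j = (if j = hd k then (1:ℝ) else 0) + (if j = tl k then (-1:ℝ) else 0) := by
    intro j
    rw [hent]
    by_cases h1 : j = hd k
    · subst h1
      simp [hne k]
    · simp [h1]
  simp only [key, Finset.sum_add_distrib, Finset.sum_ite_eq', Finset.mem_univ, if_true]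
  ring

lemma hbar_mulVec (H : Matrix (Fin m) (Fin n) ℝ) (v : Fin n × Fin d → ℝ) (k : Fin m) (i : Fin d) :
    (Hbar d H).mulVec v (k, i) = ∑ j, H k j * v (j, i) := by
  simp only [Hbar, Matrix.mulVec, dotProduct, Fintype.sum_prod_type,
    Matrix.kroneckerMap_apply, Matrix.one_apply]
  apply Finset.sum_congr rfl; intro j _
  rw [Finset.sum_eq_single i]
  · simp
  · intro l _ hl; simp [Ne.symm hl]
  · simp

lemma hbar_U (H : Matrix (Fin m) (Fin n) ℝ) (hH : IsIncidence H) (c : Fin d → ℝ) :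
    (Hbar d H).mulVec ((Umat n d).mulVec c) = 0 := by
  funext ki
  obtain ⟨k, i⟩ := ki
  rw [hbar_mulVec]
  have hU : ∀ j : Fin n, (Umat n d).mulVec c (j, i) = c i := by
    intro j
    simp only [Umat, Matrix.mulVec, dotProduct, Matrix.of_apply]
    rw [Finset.sum_eq_single i] <;> simp_all
    intro l hl; simp [Ne.symm hl]
  simp only [hU, Pi.zero_apply, ← Finset.sum_mul, rowSum_eq_zero H hH k, zero_mul]

lemma blkProj_mulVec_hbar (H : Matrix (Fin m) (Fin n) ℝ) (p : Fin n × Fin d → ℝ)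
    (hnz : ∀ k : Fin m, edgeVec H p k ≠ 0) :
    (blkProj (fun k => bearingOf (edgeVec H p k))).mulVec ((Hbar d H).mulVec p) = 0 := by
  funext ki
  obtain ⟨k, i⟩ := ki
  have key := congrFun (proj_bearing_mulVec (edgeVec H p k) (hnz k)) i
  simp only [Matrix.mulVec, dotProduct, Pi.zero_apply] at key ⊢
  rw [Fintype.sum_prod_type]
  rw [Finset.sum_eq_single k]
  · simpa [blkProj, edgeVec, Matrix.mulVec, dotProduct] using key
  · intro k' _ hk'
    simp [blkProj, Ne.symm hk']
  · simp

lemma LB_mulVec_p (H : Matrix (Fin m) (Fin n) ℝ) (p : Fin n × Fin d → ℝ)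
    (hnz : ∀ k : Fin m, edgeVec H p k ≠ 0) :
    (LB H p).mulVec p = 0 := by
  rw [LB, ← Matrix.mulVec_mulVec, ← Matrix.mulVec_mulVec,
    blkProj_mulVec_hbar H p hnz, Matrix.mulVec_zero]

lemma LB_mulVec_U (H : Matrix (Fin m) (Fin n) ℝ) (hH : IsIncidence H) (p : Fin n × Fin d → ℝ)
    (c : Fin d → ℝ) :
    (LB H p).mulVec ((Umat n d).mulVec c) = 0 := by
  rw [LB, ← Matrix.mulVec_mulVec, ← Matrix.mulVec_mulVec,
    hbar_U H hH c, Matrix.mulVec_zero, Matrix.mulVec_zero]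

end Aux

/-- the column span of `U` together with `p` lies in the null space of
`L_B`, hence `rank L_B ≤ dn - d - 1`. -/
theorem statement_2 {d m n : ℕ} (hd : 2 ≤ d)
    (H : Matrix (Fin m) (Fin n) ℝ) (hH : IsIncidence H)
    (p : Fin n × Fin d → ℝ)
    (hnz : ∀ k : Fin m, edgeVec H p k ≠ 0) :
    (∀ c : Fin d → ℝ, (LB H p).mulVec ((Umat n d).mulVec c) = 0) ∧
      (LB H p).mulVec p = 0 ∧
      (LB H p).rank ≤ d * n - d - 1 := by
  refine ⟨LB_mulVec_U H hH p, LB_mulVec_p H p hnz, ?_⟩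
  -- rank bound
  by_cases hm : m = 0
  ·
    subst hm
    have : LB H p = 0 := by
      funext a b
      simp [LB, Matrix.mul_apply, Fintype.sum_prod_type]
    rw [this]
    simp [Matrix.rank_zero]
  · have k0 : Fin m := ⟨0, Nat.pos_of_ne_zero hm⟩
    -- define the family
    set u : Fin d → (Fin n × Fin d → ℝ) := fun j => fun q => if q.2 = j then 1 else 0 with hu
    set f : Option (Fin d) → (Fin n × Fin d → ℝ) := fun o => o.elim p u with hf
    -- u j = U.mulVec (single j 1)
    have huU : ∀ j, u j = (Umat n d).mulVec (Pi.single j 1) := by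
      intro j; funext q
      simp [Umat, Matrix.mulVec, dotProduct, Pi.single_apply, ite_mul, one_mul,
        zero_mul, Finset.sum_ite_eq, hu]
    -- all f in ker
    have hker : ∀ o, f o ∈ LinearMap.ker (LB H p).mulVecLin := by
      rintro (_ | j)
      · exact LinearMap.mem_ker.mpr (by simpa [hf] using LB_mulVec_p H p hnz)
      · rw [LinearMap.mem_ker, Matrix.mulVecLin_apply]
        show (LB H p).mulVec (u j) = 0
        rw [huU j]
        exact LB_mulVec_U H hH p _
    -- edge nonzero gives two vertices with distinct positions in some coordinate
    obtain ⟨hdk, tlk, hne, hent⟩ := hH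
    have hedge : edgeVec H p k0 = fun i => p (hdk k0, i) - p (tlk k0, i) := by
      funext i
      simp only [edgeVec]
      rw [hbar_mulVec]
      have : ∀ j, H k0 j * p (j, i)
          = (if j = hdk k0 then p (hdk k0, i) else 0) + (if j = tlk k0 then -p (tlk k0, i) else 0) := by
        intro j
        rw [hent]
        by_cases h1 : j = hdk k0
        · subst h1
          simp [hne k0]
        · by_cases h2 : j = tlk k0 <;> simp [h1, h2, Ne.symm (hne k0)]
      simp only [this, Finset.sum_add_distrib, Finset.sum_ite_eq', Finset.mem_univ, if_true]
      ring
    have hex : ∃ i, p (hdk k0, i) ≠ p (tlk k0, i) := by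
      by_contra hc
      push_neg at hc
      apply hnz k0
      rw [hedge]
      funext i; simp [hc i]
    obtain ⟨i0, hi0⟩ := hex
    -- linear independence of f
    have hindep : LinearIndependent ℝ f := by
      rw [show f = (fun o : Option (Fin d) => o.elim p u) from rfl]
      -- use linearIndependent_option with v := u viewing f = Option.elim
      have hcomp : LinearIndependent ℝ u := by
        rw [Fintype.linearIndependent_iff]
        intro g hg j
        have := congrFun hg (hdk k0, j)
        simpa [hu, Finset.sum_apply, Finset.sum_ite_eq'] using this
      have hnotmem : p ∉ Submodule.span ℝ (Set.range u) := by
        intro hp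
        obtain ⟨c, hc⟩ := (Submodule.mem_span_range_iff_exists_fun ℝ).mp hp
        have h1 := congrFun hc (hdk k0, i0)
        have h2 := congrFun hc (tlk k0, i0)
        simp only [hu, Finset.sum_apply, Pi.smul_apply, smul_eq_mul, mul_ite, mul_one, mul_zero,
          Finset.sum_ite_eq', Finset.mem_univ, if_true] at h1 h2
        exact hi0 (h1.symm.trans h2)
      have : LinearIndependent ℝ (fun o : Option (Fin d) => Option.elim o p u) := by
        rw [linearIndependent_option]
        constructor
        · exact hcomp
        · exact hnotmem
      convert this using 1
    -- dimension counting
    have hspan : Submodule.span ℝ (Set.range f) ≤ LinearMap.ker (LB H p).mulVecLin := by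
      rw [Submodule.span_le]
      rintro x ⟨o, rfl⟩
      exact hker o
    have hdim1 : Module.finrank ℝ (Submodule.span ℝ (Set.range f)) = d + 1 := by
      rw [finrank_span_eq_card hindep]
      simp
    have hdim2 : d + 1 ≤ Module.finrank ℝ (LinearMap.ker (LB H p).mulVecLin) := by
      rw [← hdim1]
      exact Submodule.finrank_mono hspan
    have hrn := LinearMap.finrank_range_add_finrank_ker (LB H p).mulVecLin
    rw [Module.finrank_fintype_fun_eq_card] at hrn
    simp only [Fintype.card_prod, Fintype.card_fin] at hrn
    have hrank : (LB H p).rank = Module.finrank ℝ (LinearMap.range (LB H p).mulVecLin) := rfl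
    have hcomm : d * n = n * d := Nat.mul_comm d n
    omega
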